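/- For any greedy run ℓ_1, …, ℓ_m on a 2NC-TAP instance and any feasible solution x of the partition LP (P) (i.e., x_ℓ ≥ 0 for all ℓ ∈ L and Σ_{ℓ ∈ L crossing 𝒫} x_ℓ ≥ |𝒫| − 1 for every non-leaf node u of T and every 𝒫 ∈ Ptn⊇(comps(T−u))), the total cost of the picked links satisfies Σ_{i=1}^{m} cost(ℓ_i) ≤ H(λ−1) · Σ_{ℓ ∈ L} cost(ℓ)·x_ℓ. In particular, the cost of the set of links returned by the greedy algorithm is at most H(λ−1) times the optimal value of (P). -/

import Mathlib

open scoped Classical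
open Finset

namespace TwoNCTAP

variable {V : Type*}

/-- The graph `H` with the vertex `u` "deleted": all edges incident to `u` are removed,
so that `u` becomes an isolated vertex. -/
def delVert (H : SimpleGraph V) (u : V) : SimpleGraph V where
  Adj a b := H.Adj a b ∧ a ≠ u ∧ b ≠ u
  symm := ⟨by rintro a b ⟨h, ha, hb⟩; exact ⟨h.symm, hb, ha⟩⟩
  loopless := ⟨by rintro a ⟨h, -, -⟩; exact H.irrefl h⟩

/-- The partition of `V ∖ {u}` into the vertex sets of the connected components of `H − u`. -/
def compPartition (H : SimpleGraph V) (u : V) : Set (Set V) :=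
  {S | ∃ v, v ≠ u ∧ S = {w | (delVert H u).Reachable v w}}

/-- `P` is a partition of the set `S`. -/
def IsPartitionOf (P : Set (Set V)) (S : Set V) : Prop :=
  (∀ B ∈ P, B.Nonempty) ∧ (∀ B ∈ P, B ⊆ S) ∧ ∀ v ∈ S, ∃! B : Set V, B ∈ P ∧ v ∈ B

/-- `P ∈ Ptn⊇(comps(T−u))`: `P` is a partition of `V ∖ {u}` each of whose blocks is a
union of vertex sets of connected components of `T − u`. -/
def PtnSup (T : SimpleGraph V) (u : V) (P : Set (Set V)) : Prop :=
  IsPartitionOf P {v | v ≠ u} ∧ ∀ B ∈ compPartition T u, ∃ C ∈ P, B ⊆ C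

/-- An edge `e` crosses the partition `P` if its two endpoints lie in different blocks of `P`. -/
def Crosses (P : Set (Set V)) (e : Sym2 V) : Prop :=
  ∃ v w, e = s(v, w) ∧ ∃ B ∈ P, ∃ C ∈ P, B ≠ C ∧ v ∈ B ∧ w ∈ C

/-- `u` is a non-leaf node of `T`. -/
def NonLeaf (T : SimpleGraph V) (u : V) : Prop := 1 < (T.neighborSet u).ncard

/-- The links of the instance: the edges of `G` that are not edges of the tree `T`. -/
def links (G T : SimpleGraph V) : Set (Sym2 V) := G.edgeSet \ T.edgeSet

variable [Fintype V]

/-- Feasibility for the partition LP (P) of the 2NC-TAP instance `(G, T, cost)`. -/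
def FeasibleP (G T : SimpleGraph V) (x : Sym2 V → ℝ) : Prop :=
  (∀ ℓ ∈ links G T, 0 ≤ x ℓ) ∧
  ∀ u : V, NonLeaf T u → ∀ P : Set (Set V), PtnSup T u P →
    (P.ncard : ℝ) - 1 ≤
      ∑ ℓ ∈ Finset.univ.filter (fun ℓ : Sym2 V => ℓ ∈ links G T ∧ Crosses P ℓ), x ℓ


/-- The tree `T` together with a set `F` of links added as edges. -/
def withLinks (T : SimpleGraph V) (F : Set (Sym2 V)) : SimpleGraph V :=
  T ⊔ SimpleGraph.fromEdgeSet F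

/-- The current partition `𝒫^i_u` (0-indexed): the partition of `V ∖ {u}` into the vertex
sets of the connected components of `(T ∪ {ℓ_0, …, ℓ_{i−1}}) − u`. -/
def curPtn {m : ℕ} (T : SimpleGraph V) (ℓseq : Fin m → Sym2 V) (i : ℕ) (u : V) :
    Set (Set V) :=
  compPartition (withLinks T {e | ∃ j : Fin m, (j : ℕ) < i ∧ ℓseq j = e}) u

/-- `inc^i(e)`: the set of non-leaf nodes `u` of `T` whose current partition (at the start
of iteration `i`, 0-indexed) is crossed by the link `e`. -/
def incSet {m : ℕ} (T : SimpleGraph V) (ℓseq : Fin m → Sym2 V) (i : ℕ)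
    (e : Sym2 V) : Set V :=
  {u | NonLeaf T u ∧ Crosses (curPtn T ℓseq i u) e}

/-- A greedy run on the 2NC-TAP instance `(G, T, cost)`: a sequence of distinct links
`ℓ_0, …, ℓ_{m−1}` such that each `ℓ_i` minimizes the cost-coverage ratio at iteration `i`,
and at the end every current partition is trivial (i.e. `T` plus the picked links
is 2-node-connected). -/
def IsGreedyRun (G T : SimpleGraph V) (cost : Sym2 V → ℝ) (m : ℕ)
    (ℓseq : Fin m → Sym2 V) : Prop :=
  Function.Injective ℓseq ∧
  (∀ i, ℓseq i ∈ links G T) ∧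
  (∀ i : Fin m,
    (incSet T ℓseq (i : ℕ) (ℓseq i)).Nonempty ∧
    ∀ e ∈ links G T, (incSet T ℓseq (i : ℕ) e).Nonempty →
      cost (ℓseq i) / ((incSet T ℓseq (i : ℕ) (ℓseq i)).ncard : ℝ)
        ≤ cost e / ((incSet T ℓseq (i : ℕ) e).ncard : ℝ)) ∧
  ∀ u : V, NonLeaf T u → curPtn T ℓseq m u = {{v | v ≠ u}}

/-- `ν(u)`: the number of connected components of `T − u`. -/
noncomputable def nblocks (T : SimpleGraph V) (u : V) : ℕ := (compPartition T u).ncard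


/-- The `k`-th harmonic number `H(k) = 1 + 1/2 + ⋯ + 1/k`. -/
noncomputable def harm (k : ℕ) : ℝ := ∑ i ∈ Finset.range k, (1 : ℝ) / (i + 1)


end TwoNCTAP

namespace TwoNCTAP
variable {V : Type*}





def cls (H : SimpleGraph V) (u v : V) : Set V := {w | (delVert H u).Reachable v w}

lemma mem_cls_self (H : SimpleGraph V) (u v : V) : v ∈ cls H u v := SimpleGraph.Reachable.refl v

lemma cls_mem_compPartition {H : SimpleGraph V} {u v : V} (hv : v ≠ u) :
    cls H u v ∈ compPartition H u := ⟨v, hv, rfl⟩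

lemma delVert_mono {H H' : SimpleGraph V} {u : V} (h : H ≤ H') : delVert H u ≤ delVert H' u :=
  fun _a _b hab => ⟨h hab.1, hab.2⟩

lemma ne_of_reach_delVert {H : SimpleGraph V} {u v w : V} (h : (delVert H u).Reachable v w)
    (hv : v ≠ u) : w ≠ u := by
  rintro rfl
  obtain ⟨p⟩ := h.symm
  cases p with
  | nil => exact hv rfl
  | cons h q => exact h.2.1 rfl

lemma cls_eq_of_reach {H : SimpleGraph V} {u v w : V} (h : (delVert H u).Reachable v w) :
    cls H u v = cls H u w := by
  ext z; exact ⟨fun hz => h.symm.trans hz, fun hz => h.trans hz⟩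

lemma eq_cls_of_mem {H : SimpleGraph V} {u : V} {S : Set V} (hS : S ∈ compPartition H u)
    {v : V} (hv : v ∈ S) : S = cls H u v := by
  obtain ⟨v', _, rfl⟩ := hS
  exact cls_eq_of_reach hv

lemma ne_of_mem_block {H : SimpleGraph V} {u : V} {S : Set V} (hS : S ∈ compPartition H u)
    {v : V} (hv : v ∈ S) : v ≠ u := by
  obtain ⟨v', hv', rfl⟩ := hS
  exact ne_of_reach_delVert hv hv'

lemma compPartition_isPartitionOf (H : SimpleGraph V) (u : V) :
    IsPartitionOf (compPartition H u) {v | v ≠ u} := by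
  refine ⟨?_, ?_, ?_⟩
  · rintro B ⟨v, hv, rfl⟩; exact ⟨v, mem_cls_self H u v⟩
  · intro B hB w hw; exact ne_of_mem_block hB hw
  · intro v hv
    refine ⟨cls H u v, ⟨cls_mem_compPartition hv, mem_cls_self H u v⟩, ?_⟩
    rintro B ⟨hB, hvB⟩
    exact eq_cls_of_mem hB hvB

lemma crosses_compPartition_iff {H : SimpleGraph V} {u v w : V} :
    Crosses (compPartition H u) s(v, w) ↔
      v ≠ u ∧ w ≠ u ∧ ¬ (delVert H u).Reachable v w := by
  constructor
  · rintro ⟨v', w', heq, B, hB, C, hC, hBC, hvB, hwC⟩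
    have key : ∀ a b : V, a ∈ B → b ∈ C → a ≠ u ∧ b ≠ u ∧ ¬ (delVert H u).Reachable a b := by
      intro a b ha hb
      refine ⟨ne_of_mem_block hB ha, ne_of_mem_block hC hb, fun hr => hBC ?_⟩
      rw [eq_cls_of_mem hB ha, eq_cls_of_mem hC hb, cls_eq_of_reach hr]
    rw [Sym2.eq_iff] at heq
    rcases heq with ⟨rfl, rfl⟩ | ⟨rfl, rfl⟩
    · exact key v w hvB hwC
    · obtain ⟨h1, h2, h3⟩ := key w v hvB hwC
      exact ⟨h2, h1, fun hr => h3 hr.symm⟩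
  · rintro ⟨hv, hw, hr⟩
    refine ⟨v, w, rfl, cls H u v, cls_mem_compPartition hv, cls H u w,
      cls_mem_compPartition hw, ?_, mem_cls_self H u v, mem_cls_self H u w⟩
    intro h
    exact hr (by have := mem_cls_self H u w; rw [← h] at this; exact this)

lemma crosses_anti {H H' : SimpleGraph V} {u : V} (h : H ≤ H') {e : Sym2 V}
    (hc : Crosses (compPartition H' u) e) : Crosses (compPartition H u) e := by
  obtain ⟨v, w, rfl, rest⟩ := hc
  have hc' : Crosses (compPartition H' u) s(v, w) := ⟨v, w, rfl, rest⟩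
  rw [crosses_compPartition_iff] at hc' ⊢
  exact ⟨hc'.1, hc'.2.1, fun hr => hc'.2.2 (hr.mono (delVert_mono h))⟩

end TwoNCTAP

namespace TwoNCTAP
variable {V : Type*} [Fintype V] {H H' : SimpleGraph V} {u : V}

noncomputable def coarsenMap (H' : SimpleGraph V) (u : V) (S : Set V) : Set V :=
  {w | ∃ x ∈ S, (delVert H' u).Reachable x w}

lemma coarsenMap_cls (h : H ≤ H') (v : V) : coarsenMap H' u (cls H u v) = cls H' u v := by
  ext w
  constructor
  · rintro ⟨x, hx, hr⟩
    exact ((hx : (delVert H u).Reachable v x).mono (delVert_mono h)).trans hr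
  · intro hw; exact ⟨v, mem_cls_self _ _ _, hw⟩

lemma compPartition_eq_image (h : H ≤ H') :
    compPartition H' u = coarsenMap H' u '' compPartition H u := by
  ext S
  constructor
  · rintro ⟨v, hv, rfl⟩
    exact ⟨cls H u v, cls_mem_compPartition hv, coarsenMap_cls h v⟩
  · rintro ⟨S, ⟨v, hv, rfl⟩, rfl⟩
    show coarsenMap H' u (cls H u v) ∈ compPartition H' u
    rw [coarsenMap_cls h]
    exact cls_mem_compPartition hv

lemma ncard_compPartition_anti (h : H ≤ H') :
    (compPartition H' u).ncard ≤ (compPartition H u).ncard := by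
  rw [compPartition_eq_image h]
  exact Set.ncard_image_le (Set.toFinite _)

lemma ncard_compPartition_lt (h : H ≤ H') {v w : V} (hv : v ≠ u) (hw : w ≠ u)
    (hnr : ¬ (delVert H u).Reachable v w) (hr' : (delVert H' u).Reachable v w) :
    (compPartition H' u).ncard + 1 ≤ (compPartition H u).ncard := by
  have hBC : cls H u v ≠ cls H u w := by
    intro h'
    exact hnr (by have := mem_cls_self H u w; rw [← h'] at this; exact this)
  have himg : compPartition H' u = coarsenMap H' u '' (compPartition H u \ {cls H u v}) := by
    apply Set.Subset.antisymm
    · rw [compPartition_eq_image h]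
      rintro S' ⟨S, hS, rfl⟩
      by_cases hSB : S = cls H u v
      · subst hSB
        refine ⟨cls H u w, ⟨cls_mem_compPartition hw, fun hmem => hBC (Set.eq_of_mem_singleton hmem).symm⟩, ?_⟩
        rw [coarsenMap_cls h, coarsenMap_cls h]
        exact (cls_eq_of_reach hr').symm
      · exact ⟨S, ⟨hS, hSB⟩, rfl⟩
    · rw [compPartition_eq_image h]
      exact Set.image_mono Set.diff_subset
  have h1 : (compPartition H' u).ncard ≤ (compPartition H u \ {cls H u v}).ncard := by
    rw [himg]; exact Set.ncard_image_le (Set.toFinite _)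
  have h2 : (compPartition H u \ {cls H u v}).ncard + 1 = (compPartition H u).ncard :=
    Set.ncard_diff_singleton_add_one (cls_mem_compPartition hv) (Set.toFinite _)
  omega

end TwoNCTAP

namespace TwoNCTAP
variable {V : Type*}






variable {m : ℕ} {G T : SimpleGraph V} {ℓseq : Fin m → Sym2 V}

/-- the graph at step `i` -/
def stepGraph (T : SimpleGraph V) (ℓseq : Fin m → Sym2 V) (i : ℕ) : SimpleGraph V :=
  withLinks T {e | ∃ j : Fin m, (j : ℕ) < i ∧ ℓseq j = e}

lemma curPtn_eq (i : ℕ) (u : V) : curPtn T ℓseq i u = compPartition (stepGraph T ℓseq i) u := rfl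

lemma T_le_stepGraph (i : ℕ) : T ≤ stepGraph T ℓseq i := le_sup_left

lemma stepGraph_mono {i i' : ℕ} (h : i ≤ i') : stepGraph T ℓseq i ≤ stepGraph T ℓseq i' := by
  refine sup_le_sup_left (SimpleGraph.fromEdgeSet_mono ?_) T
  rintro e ⟨j, hj, rfl⟩
  exact ⟨j, lt_of_lt_of_le hj h, rfl⟩

lemma stepGraph_zero : stepGraph T ℓseq 0 = T := by
  have : {e | ∃ j : Fin m, (j : ℕ) < 0 ∧ ℓseq j = e} = (∅ : Set (Sym2 V)) := by
    ext e; simp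
  rw [stepGraph, withLinks, this, SimpleGraph.fromEdgeSet_empty, sup_bot_eq]

lemma incSet_anti {i i' : ℕ} (h : i ≤ i') (e : Sym2 V) :
    incSet T ℓseq i' e ⊆ incSet T ℓseq i e := by
  rintro u ⟨h1, h2⟩
  exact ⟨h1, crosses_anti (stepGraph_mono h) h2⟩


lemma ptnSup_curPtn (i : ℕ) (u : V) : PtnSup T u (curPtn T ℓseq i u) := by
  constructor
  · exact compPartition_isPartitionOf _ u
  · rintro B ⟨v, hv, rfl⟩
    refine ⟨cls (stepGraph T ℓseq i) u v, cls_mem_compPartition hv, ?_⟩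
    intro w hw
    exact (hw : (delVert T u).Reachable v w).mono (delVert_mono (T_le_stepGraph i))

end TwoNCTAP

namespace TwoNCTAP
variable {V : Type*} [Fintype V] {m : ℕ} {G T : SimpleGraph V} {ℓseq : Fin m → Sym2 V}

lemma ncard_curPtn_anti {i i' : ℕ} (h : i ≤ i') (u : V) :
    (curPtn T ℓseq i' u).ncard ≤ (curPtn T ℓseq i u).ncard :=
  ncard_compPartition_anti (stepGraph_mono h)

lemma ncard_curPtn_succ_of_crosses {j : Fin m} {i : ℕ} (hj : (j : ℕ) = i)
    (hlink : ℓseq j ∈ links G T) {u : V} (hc : Crosses (curPtn T ℓseq i u) (ℓseq j)) :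
    (curPtn T ℓseq (i + 1) u).ncard + 1 ≤ (curPtn T ℓseq i u).ncard := by
  obtain ⟨v, w, heq, rest⟩ := hc
  have hc' : Crosses (curPtn T ℓseq i u) s(v, w) := ⟨v, w, rfl, rest⟩
  rw [curPtn_eq, crosses_compPartition_iff] at hc'
  obtain ⟨hv, hw, hnr⟩ := hc'
  have hvw : v ≠ w := by
    have : s(v, w) ∈ G.edgeSet := heq ▸ hlink.1
    exact ((SimpleGraph.mem_edgeSet _).mp this).ne
  have hadj : (delVert (stepGraph T ℓseq (i + 1)) u).Adj v w := by
    refine ⟨Or.inr ?_, hv, hw⟩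
    exact (SimpleGraph.fromEdgeSet_adj _).mpr ⟨⟨j, by omega, heq⟩, hvw⟩
  exact ncard_compPartition_lt (stepGraph_mono (Nat.le_succ i)) hv hw hnr hadj.reachable

lemma incSet_final_empty (hfin : ∀ u : V, NonLeaf T u → curPtn T ℓseq m u = {{v | v ≠ u}})
    (e : Sym2 V) : incSet T ℓseq m e = ∅ := by
  ext u
  simp only [incSet, Set.mem_setOf_eq, Set.mem_empty_iff_false, iff_false, not_and]
  intro hnl hc
  obtain ⟨v, w, heq, B, hB, C, hC, hBC, -⟩ := hc
  rw [hfin u hnl] at hB hC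
  exact hBC (hB.trans hC.symm)

lemma ncard_curPtn_final (hfin : ∀ u : V, NonLeaf T u → curPtn T ℓseq m u = {{v | v ≠ u}})
    {u : V} (hu : NonLeaf T u) : (curPtn T ℓseq m u).ncard = 1 := by
  rw [hfin u hu]; exact Set.ncard_singleton _

lemma incSet_zero_ncard_le {lam : ℕ} (hT : T.IsTree)
    (hlam : IsGreatest {d : ℕ | ∃ v w : V, s(v, w) ∈ links G T ∧ d = T.dist v w} lam)
    {e : Sym2 V} (he : e ∈ links G T) :
    (incSet T ℓseq 0 e).ncard ≤ lam - 1 := by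
  induction e using Sym2.inductionOn with
  | hf v w =>
  have hvw : v ≠ w := ((SimpleGraph.mem_edgeSet _).mp he.1).ne
  have hdist0 : T.dist v w ≠ 0 := by
    rw [SimpleGraph.dist_ne_zero_iff_ne_and_reachable]
    exact ⟨hvw, hT.isConnected v w⟩
  obtain ⟨p, hp⟩ := SimpleGraph.exists_walk_of_dist_ne_zero hdist0
  set q := p.bypass with hq
  have hqpath : q.IsPath := p.bypass_isPath
  have hqlen : q.length ≤ T.dist v w := hp ▸ p.length_bypass_le
  have hdlam : T.dist v w ≤ lam := hlam.2 ⟨v, w, he, rfl⟩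
  have hsub : incSet T ℓseq 0 s(v, w) ⊆ ↑(q.support.toFinset \ {v, w}) := by
    rintro u ⟨-, hc⟩
    rw [curPtn_eq, stepGraph_zero, crosses_compPartition_iff] at hc
    obtain ⟨hv, hw, hnr⟩ := hc
    have hmem : u ∈ q.support := by
      by_contra hu
      refine hnr ?_
      have hedges : ∀ e ∈ q.edges, e ∈ (delVert T u).edgeSet := by
        intro e hee
        induction e using Sym2.inductionOn with
        | hf a b =>
        refine (SimpleGraph.mem_edgeSet _).mpr ⟨q.adj_of_mem_edges hee, ?_, ?_⟩
        · rintro rfl; exact hu (q.fst_mem_support_of_mem_edges hee)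
        · rintro rfl; exact hu (q.snd_mem_support_of_mem_edges hee)
      exact (q.transfer (delVert T u) hedges).reachable
    simp only [Finset.coe_sdiff, Set.mem_diff, Finset.coe_insert, Finset.coe_singleton,
      List.coe_toFinset, Set.mem_setOf_eq, Set.mem_insert_iff, Set.mem_singleton_iff]
    exact ⟨hmem, by rintro (rfl | rfl) <;> simp_all⟩
  calc (incSet T ℓseq 0 s(v, w)).ncard ≤ (↑(q.support.toFinset \ {v, w}) : Set V).ncard :=
        Set.ncard_le_ncard hsub (Set.toFinite _)
    _ = (q.support.toFinset \ {v, w}).card := Set.ncard_coe_finset _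
    _ = q.support.toFinset.card - ({v, w} : Finset V).card := by
        rw [Finset.card_sdiff_of_subset]
        intro x hx
        simp only [Finset.mem_insert, Finset.mem_singleton] at hx
        rcases hx with rfl | rfl
        · exact List.mem_toFinset.mpr q.start_mem_support
        · exact List.mem_toFinset.mpr q.end_mem_support
    _ = q.support.toFinset.card - 2 := by rw [Finset.card_pair hvw]
    _ ≤ (q.length + 1) - 2 := by
        have := List.toFinset_card_of_nodup hqpath.support_nodup
        rw [this, q.length_support]
    _ ≤ lam - 1 := by omega

end TwoNCTAP

namespace TwoNCTAP


lemma harm_nonneg (k : ℕ) : 0 ≤ harm k :=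
  Finset.sum_nonneg fun i _ => by positivity

lemma harm_mono {k l : ℕ} (h : k ≤ l) : harm k ≤ harm l :=
  Finset.sum_le_sum_of_subset_of_nonneg (Finset.range_subset_range.mpr h)
    (fun i _ _ => by positivity)

lemma harm_diff_ge {a b : ℕ} (h : b ≤ a) (ha : 0 < a) :
    ((a : ℝ) - b) / a ≤ harm a - harm b := by
  have h1 : harm a - harm b = ∑ i ∈ Finset.Ico b a, (1 : ℝ) / (i + 1) := by
    rw [harm, harm, Finset.sum_Ico_eq_sub _ h]
  rw [h1]
  have h2 : ∀ i ∈ Finset.Ico b a, (1 : ℝ) / a ≤ 1 / (i + 1) := by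
    intro i hi
    rw [Finset.mem_Ico] at hi
    apply one_div_le_one_div_of_le (by positivity)
    have : i + 1 ≤ a := hi.2
    exact_mod_cast this
  calc ((a : ℝ) - b) / a = ((a - b : ℕ) : ℝ) * (1 / a) := by
        rw [Nat.cast_sub h]; ring
    _ = (Finset.Ico b a).card • ((1 : ℝ) / a) := by rw [Nat.card_Ico]; simp
    _ ≤ ∑ i ∈ Finset.Ico b a, (1 : ℝ) / (i + 1) := Finset.card_nsmul_le_sum _ _ _ h2

lemma abel_identity (r C : ℕ → ℝ) (n : ℕ) :
    ∑ i ∈ Finset.range (n + 1), r i * (C i - C (i + 1)) =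
      r 0 * C 0 + (∑ i ∈ Finset.range n, (r (i + 1) - r i) * C (i + 1)) - r n * C (n + 1) := by
  induction n with
  | zero => simp; ring
  | succ n ih =>
    rw [Finset.sum_range_succ, ih, Finset.sum_range_succ]
    ring

lemma abel_ineq (m : ℕ) (r A B : ℕ → ℝ) (h0 : 0 ≤ r 0) (hmono : ∀ i, r i ≤ r (i + 1))
    (hAB : ∀ i, A i ≤ B i) (hA : A m = 0) (hB : B m = 0) :
    ∑ i ∈ Finset.range m, r i * (A i - A (i + 1)) ≤
      ∑ i ∈ Finset.range m, r i * (B i - B (i + 1)) := by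
  cases m with
  | zero => simp
  | succ n =>
    rw [abel_identity, abel_identity, hA, hB]
    simp only [mul_zero, sub_zero]
    have h1 : r 0 * A 0 ≤ r 0 * B 0 := mul_le_mul_of_nonneg_left (hAB 0) h0
    have h2 : ∑ i ∈ Finset.range n, (r (i + 1) - r i) * A (i + 1) ≤
        ∑ i ∈ Finset.range n, (r (i + 1) - r i) * B (i + 1) := by
      apply Finset.sum_le_sum
      intro i _
      exact mul_le_mul_of_nonneg_left (hAB (i + 1)) (by linarith [hmono i])
    linarith

lemma harmonic_charge (m : ℕ) (r : ℕ → ℝ) (c : ℝ) (hc : 0 ≤ c) (n : ℕ → ℕ)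
    (hmono : ∀ i, n (i + 1) ≤ n i) (hr : ∀ i < m, 0 < n i → r i ≤ c / n i)
    (hr0 : ∀ i < m, 0 ≤ r i) (K : ℕ) (hK : n 0 ≤ K) :
    ∑ i ∈ Finset.range m, r i * ((n i : ℝ) - n (i + 1)) ≤ c * harm K := by
  have step : ∀ i ∈ Finset.range m,
      r i * ((n i : ℝ) - n (i + 1)) ≤ c * (harm (n i) - harm (n (i + 1))) := by
    intro i hi
    rw [Finset.mem_range] at hi
    rcases eq_or_lt_of_le (hmono i) with heq | hlt
    · rw [heq]; simp
    · have hpos : 0 < n i := lt_of_le_of_lt (Nat.zero_le _) hlt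
      have hΔ : (0 : ℝ) ≤ (n i : ℝ) - n (i + 1) := by
        have := hmono i; exact sub_nonneg.mpr (by exact_mod_cast this)
      calc r i * ((n i : ℝ) - n (i + 1)) ≤ (c / n i) * ((n i : ℝ) - n (i + 1)) :=
            mul_le_mul_of_nonneg_right (hr i hi hpos) hΔ
        _ = c * (((n i : ℝ) - n (i + 1)) / n i) := by ring
        _ ≤ c * (harm (n i) - harm (n (i + 1))) := by
            apply mul_le_mul_of_nonneg_left _ hc
            exact harm_diff_ge (hmono i) hpos
  calc ∑ i ∈ Finset.range m, r i * ((n i : ℝ) - n (i + 1))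
      ≤ ∑ i ∈ Finset.range m, c * (harm (n i) - harm (n (i + 1))) := Finset.sum_le_sum step
    _ = c * (harm (n 0) - harm (n m)) := by
        rw [← Finset.mul_sum, Finset.sum_range_sub' (fun i => harm (n i))]
    _ ≤ c * harm K := by
        apply mul_le_mul_of_nonneg_left _ hc
        have := harm_nonneg (n m)
        have := harm_mono hK
        linarith

end TwoNCTAP

namespace TwoNCTAP
variable {V : Type*} [Fintype V] {m : ℕ} {G T : SimpleGraph V} {ℓseq : Fin m → Sym2 V}


lemma ncard_incSet_eq (i : ℕ) (e : Sym2 V) :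
    ((incSet T ℓseq i e).ncard : ℝ) =
      ∑ u ∈ Finset.univ.filter (fun u => NonLeaf T u),
        (if Crosses (curPtn T ℓseq i u) e then (1 : ℝ) else 0) := by
  have h1 : incSet T ℓseq i e =
      ↑(Finset.univ.filter (fun u : V => NonLeaf T u ∧ Crosses (curPtn T ℓseq i u) e)) := by
    ext u; simp [incSet]
  rw [h1, Set.ncard_coe_finset, Finset.sum_boole, Finset.filter_filter]

lemma D_le_B (x : Sym2 V → ℝ) (hx : FeasibleP G T x) (i : ℕ) :
    ∑ u ∈ Finset.univ.filter (fun u => NonLeaf T u), (((curPtn T ℓseq i u).ncard : ℝ) - 1) ≤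
      ∑ ℓ ∈ Finset.univ.filter (fun ℓ : Sym2 V => ℓ ∈ links G T),
        x ℓ * ((incSet T ℓseq i ℓ).ncard : ℝ) := by
  have step : ∀ u ∈ Finset.univ.filter (fun u => NonLeaf T u),
      ((curPtn T ℓseq i u).ncard : ℝ) - 1 ≤
        ∑ ℓ ∈ Finset.univ.filter (fun ℓ : Sym2 V => ℓ ∈ links G T),
          (if Crosses (curPtn T ℓseq i u) ℓ then x ℓ else 0) := by
    intro u hu
    rw [Finset.mem_filter] at hu
    have h2 := hx.2 u hu.2 (curPtn T ℓseq i u) (ptnSup_curPtn i u)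
    refine le_trans h2 (le_of_eq ?_)
    rw [← Finset.sum_filter, Finset.filter_filter]
  calc ∑ u ∈ Finset.univ.filter (fun u => NonLeaf T u), (((curPtn T ℓseq i u).ncard : ℝ) - 1)
      ≤ ∑ u ∈ Finset.univ.filter (fun u => NonLeaf T u),
          ∑ ℓ ∈ Finset.univ.filter (fun ℓ : Sym2 V => ℓ ∈ links G T),
            (if Crosses (curPtn T ℓseq i u) ℓ then x ℓ else 0) := Finset.sum_le_sum step
    _ = ∑ ℓ ∈ Finset.univ.filter (fun ℓ : Sym2 V => ℓ ∈ links G T),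
          ∑ u ∈ Finset.univ.filter (fun u => NonLeaf T u),
            (if Crosses (curPtn T ℓseq i u) ℓ then x ℓ else 0) := Finset.sum_comm
    _ = ∑ ℓ ∈ Finset.univ.filter (fun ℓ : Sym2 V => ℓ ∈ links G T),
          x ℓ * ((incSet T ℓseq i ℓ).ncard : ℝ) := by
        apply Finset.sum_congr rfl
        intro ℓ _
        rw [ncard_incSet_eq, Finset.mul_sum]
        apply Finset.sum_congr rfl
        intro u _
        by_cases h : Crosses (curPtn T ℓseq i u) ℓ <;> simp [h]

end TwoNCTAP

namespace TwoNCTAP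
variable {V : Type*} [Fintype V]



/-- For any greedy run `ℓ_1, …, ℓ_m` on a 2NC-TAP instance and any
feasible solution `x` of the partition LP (P), the total cost of the picked links is at
most `H(λ−1)` times the objective value of `x`; in particular, the greedy algorithm is an
`H(λ−1)`-approximation relative to the optimum of (P). Here `λ` is the maximum number of
edges of a tree path `T(ℓ)` over all links `ℓ`. -/
theorem greedy_cost_le_harmonic_times_LP
    (G T : SimpleGraph V) (hV : 3 ≤ Fintype.card V) (hTG : T ≤ G) (hT : T.IsTree)
    (cost : Sym2 V → ℝ) (hcost : ∀ e ∈ links G T, 0 ≤ cost e)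
    (lam : ℕ)
    (hlam : IsGreatest {d : ℕ | ∃ v w : V, s(v, w) ∈ links G T ∧ d = T.dist v w} lam)
    (m : ℕ) (ℓseq : Fin m → Sym2 V) (hrun : IsGreedyRun G T cost m ℓseq)
    (x : Sym2 V → ℝ) (hx : FeasibleP G T x) :
    ∑ i : Fin m, cost (ℓseq i)
      ≤ harm (lam - 1) *
        ∑ ℓ ∈ Finset.univ.filter (fun ℓ : Sym2 V => ℓ ∈ links G T), cost ℓ * x ℓ := by
  classical
  obtain ⟨hinj, hlinks, hgreedy, hfin⟩ := hrun
  set NL := Finset.univ.filter (fun u => NonLeaf T u) with hNL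
  set Lfin := Finset.univ.filter (fun ℓ : Sym2 V => ℓ ∈ links G T) with hLfin
  set N : ℕ → Sym2 V → ℕ := fun i ℓ => (incSet T ℓseq i ℓ).ncard with hN
  set D : ℕ → ℝ := fun i => ∑ u ∈ NL, (((curPtn T ℓseq i u).ncard : ℝ) - 1) with hD
  set Bf : ℕ → ℝ := fun i => ∑ ℓ ∈ Lfin, x ℓ * (N i ℓ : ℝ) with hB
  set ρ : ℕ → ℝ :=
    fun i => if h : i < m then cost (ℓseq ⟨i, h⟩) / (N i (ℓseq ⟨i, h⟩) : ℝ) else 0 with hρdef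
  set r : ℕ → ℝ := fun i => ρ (min i (m - 1)) with hrdef
  have hNpos : ∀ i : Fin m, 0 < N (i : ℕ) (ℓseq i) := fun i =>
    (Set.ncard_pos (Set.toFinite _)).mpr (hgreedy i).1
  have hρ_eq : ∀ (i : ℕ) (h : i < m),
      ρ i = cost (ℓseq ⟨i, h⟩) / (N i (ℓseq ⟨i, h⟩) : ℝ) := fun i h => dif_pos h
  have hρnonneg : ∀ i, 0 ≤ ρ i := by
    intro i
    rw [hρdef]
    dsimp only
    by_cases h : i < m
    · rw [dif_pos h]
      exact div_nonneg (hcost _ (hlinks _)) (Nat.cast_nonneg _)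
    · rw [dif_neg h]
  have hr_eq : ∀ i, i < m → r i = ρ i := by
    intro i h
    rw [hrdef]
    simp only
    rw [Nat.min_eq_left (by omega)]
  have hNanti : ∀ (i : ℕ) (ℓ : Sym2 V), N (i + 1) ℓ ≤ N i ℓ := fun i ℓ =>
    Set.ncard_le_ncard (incSet_anti (Nat.le_succ i) ℓ) (Set.toFinite _)
  have hρmono : ∀ i, i + 1 < m → ρ i ≤ ρ (i + 1) := by
    intro i hi
    have hi' : i < m := by omega
    rw [hρ_eq i hi', hρ_eq (i + 1) hi]
    set b := ℓseq ⟨i + 1, hi⟩ with hbdef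
    have hb1 : (incSet T ℓseq (i + 1) b).Nonempty := (hgreedy ⟨i + 1, hi⟩).1
    have hb0 : (incSet T ℓseq i b).Nonempty := by
      obtain ⟨u, hu⟩ := hb1
      exact ⟨u, incSet_anti (Nat.le_succ i) b hu⟩
    have hg := (hgreedy ⟨i, hi'⟩).2 b (hlinks _) hb0
    refine le_trans hg ?_
    have hb1' : 0 < N (i + 1) b := (Set.ncard_pos (Set.toFinite _)).mpr hb1
    have h1 : (0:ℝ) < (N (i + 1) b : ℝ) := by exact_mod_cast hb1'
    have h2 : (N (i + 1) b : ℝ) ≤ (N i b : ℝ) := by exact_mod_cast hNanti i b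
    gcongr
    exact hcost _ (hlinks _)
  have hrmono : ∀ i, r i ≤ r (i + 1) := by
    intro i
    rcases le_or_gt (i + 1) (m - 1) with h | h
    · rw [hrdef]
      simp only
      rw [Nat.min_eq_left (by omega), Nat.min_eq_left h]
      exact hρmono i (by omega)
    · rw [hrdef]
      simp only
      rw [Nat.min_eq_right (by omega), Nat.min_eq_right (by omega)]
  have h0 : 0 ≤ r 0 := by rw [hrdef]; exact hρnonneg _
  have hDm : D m = 0 := by
    rw [hD]
    apply Finset.sum_eq_zero
    intro u hu
    rw [hNL, Finset.mem_filter] at hu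
    rw [ncard_curPtn_final hfin hu.2]
    norm_num
  have hBm : Bf m = 0 := by
    rw [hB]
    apply Finset.sum_eq_zero
    intro ℓ _
    rw [hN]
    simp only
    rw [incSet_final_empty hfin ℓ]
    simp
  have hAB : ∀ i, D i ≤ Bf i := fun i => D_le_B x hx i
  have key1 : ∑ i : Fin m, cost (ℓseq i) ≤
      ∑ i ∈ Finset.range m, r i * (D i - D (i + 1)) := by
    rw [← Fin.sum_univ_eq_sum_range (fun i => r i * (D i - D (i + 1))) m]
    apply Finset.sum_le_sum
    intro i _
    have hio : (i : ℕ) < m := i.isLt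
    have hri : r (i : ℕ) = cost (ℓseq i) / (N (i : ℕ) (ℓseq i) : ℝ) := by
      rw [hr_eq _ hio, hρ_eq _ hio]
    have hNle : ((N (i : ℕ) (ℓseq i) : ℝ)) ≤ D (i : ℕ) - D ((i : ℕ) + 1) := by
      rw [hD]
      simp only
      rw [← Finset.sum_sub_distrib, hN]
      simp only
      rw [ncard_incSet_eq, ← hNL]
      apply Finset.sum_le_sum
      intro u hu
      rw [hNL, Finset.mem_filter] at hu
      by_cases hcr : Crosses (curPtn T ℓseq (i : ℕ) u) (ℓseq i)
      · rw [if_pos hcr]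
        have hstep := ncard_curPtn_succ_of_crosses (j := i) rfl (hlinks i) hcr
        have : ((curPtn T ℓseq ((i : ℕ) + 1) u).ncard : ℝ) + 1 ≤
            ((curPtn T ℓseq (i : ℕ) u).ncard : ℝ) := by exact_mod_cast hstep
        linarith
      · rw [if_neg hcr]
        have hstep := ncard_curPtn_anti (T := T) (ℓseq := ℓseq) (Nat.le_succ (i : ℕ)) u
        have : ((curPtn T ℓseq ((i : ℕ) + 1) u).ncard : ℝ) ≤
            ((curPtn T ℓseq (i : ℕ) u).ncard : ℝ) := by exact_mod_cast hstep
        linarith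
    have hq : 0 ≤ cost (ℓseq i) / (N (i : ℕ) (ℓseq i) : ℝ) :=
      div_nonneg (hcost _ (hlinks _)) (Nat.cast_nonneg _)
    have hNne : ((N (i : ℕ) (ℓseq i) : ℝ)) ≠ 0 := by
      have := hNpos i
      positivity
    calc cost (ℓseq i)
        = (cost (ℓseq i) / (N (i : ℕ) (ℓseq i) : ℝ)) * (N (i : ℕ) (ℓseq i) : ℝ) := by
          rw [div_mul_cancel₀ _ hNne]
      _ ≤ (cost (ℓseq i) / (N (i : ℕ) (ℓseq i) : ℝ)) * (D (i : ℕ) - D ((i : ℕ) + 1)) :=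
          mul_le_mul_of_nonneg_left hNle hq
      _ = r (i : ℕ) * (D (i : ℕ) - D ((i : ℕ) + 1)) := by rw [hri]
  have key2 := abel_ineq m r D Bf h0 hrmono hAB hDm hBm
  have key3 : ∑ i ∈ Finset.range m, r i * (Bf i - Bf (i + 1)) =
      ∑ ℓ ∈ Lfin, x ℓ * ∑ i ∈ Finset.range m, r i * ((N i ℓ : ℝ) - (N (i + 1) ℓ : ℝ)) := by
    calc ∑ i ∈ Finset.range m, r i * (Bf i - Bf (i + 1))
        = ∑ i ∈ Finset.range m, ∑ ℓ ∈ Lfin,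
            r i * (x ℓ * ((N i ℓ : ℝ) - (N (i + 1) ℓ : ℝ))) := by
          apply Finset.sum_congr rfl
          intro i _
          rw [hB]
          simp only
          rw [← Finset.sum_sub_distrib, Finset.mul_sum]
          apply Finset.sum_congr rfl
          intro ℓ _
          ring
      _ = ∑ ℓ ∈ Lfin, ∑ i ∈ Finset.range m,
            r i * (x ℓ * ((N i ℓ : ℝ) - (N (i + 1) ℓ : ℝ))) := Finset.sum_comm
      _ = ∑ ℓ ∈ Lfin, x ℓ * ∑ i ∈ Finset.range m,
            r i * ((N i ℓ : ℝ) - (N (i + 1) ℓ : ℝ)) := by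
          apply Finset.sum_congr rfl
          intro ℓ _
          rw [Finset.mul_sum]
          apply Finset.sum_congr rfl
          intro i _
          ring
  have key4 : ∀ ℓ ∈ Lfin,
      ∑ i ∈ Finset.range m, r i * ((N i ℓ : ℝ) - (N (i + 1) ℓ : ℝ)) ≤
        cost ℓ * harm (lam - 1) := by
    intro ℓ hℓ
    rw [hLfin, Finset.mem_filter] at hℓ
    have hℓL : ℓ ∈ links G T := hℓ.2
    apply harmonic_charge m r (cost ℓ) (hcost ℓ hℓL) (fun i => N i ℓ)
        (fun i => hNanti i ℓ) ?_ ?_ (lam - 1) (incSet_zero_ncard_le hT hlam hℓL)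
    · intro i him hpos
      have hne : (incSet T ℓseq i ℓ).Nonempty := (Set.ncard_pos (Set.toFinite _)).mp hpos
      rw [hr_eq i him, hρ_eq i him]
      exact (hgreedy ⟨i, him⟩).2 ℓ hℓL hne
    · intro i him
      rw [hr_eq i him]
      exact hρnonneg i
  calc ∑ i : Fin m, cost (ℓseq i)
      ≤ ∑ i ∈ Finset.range m, r i * (D i - D (i + 1)) := key1
    _ ≤ ∑ i ∈ Finset.range m, r i * (Bf i - Bf (i + 1)) := key2
    _ = ∑ ℓ ∈ Lfin, x ℓ * ∑ i ∈ Finset.range m,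
          r i * ((N i ℓ : ℝ) - (N (i + 1) ℓ : ℝ)) := key3
    _ ≤ ∑ ℓ ∈ Lfin, x ℓ * (cost ℓ * harm (lam - 1)) := by
        apply Finset.sum_le_sum
        intro ℓ hℓ
        have hℓL : ℓ ∈ links G T := by
          rw [hLfin, Finset.mem_filter] at hℓ; exact hℓ.2
        exact mul_le_mul_of_nonneg_left (key4 ℓ hℓ) (hx.1 ℓ hℓL)
    _ = harm (lam - 1) * ∑ ℓ ∈ Lfin, cost ℓ * x ℓ := by
        rw [Finset.mul_sum]
        apply Finset.sum_congr rfl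
        intro ℓ _
        ring

end TwoNCTAP
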